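/- arXiv:1804.05985 — 4 statements merged into one kernel-verified Lean document; each statement's English description precedes it below -/
import Mathlib

section
/- If I = [a,b] is an interval with b − a > 4, then for every nonzero polynomial p with integer coefficients, sup_{x∈I} |p(x)| ≥ 1; consequently t_{ℤ,n}(I) = 1 for every positive integer n (the infimum being achieved by the constant polynomial 1). -/
open Polynomial Filter


lemma sum_geo_primroot {N : ℕ} {ζ : ℂ} (hζ : IsPrimitiveRoot ζ N) (k : ℕ) :
    ∑ j ∈ Finset.range N, (ζ^k)^j = if N ∣ k then (N : ℂ) else 0 := by
  by_cases h : N ∣ k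
  · have : ζ ^ k = 1 := hζ.pow_eq_one_iff_dvd k |>.mpr h
    simp [this, h]
  · have h1 : ζ ^ k ≠ 1 := fun hc => h ((hζ.pow_eq_one_iff_dvd k).mp hc)
    rw [if_neg h, geom_sum_eq h1]
    have : (ζ ^ k) ^ N = 1 := by
      rw [← pow_mul, mul_comm, pow_mul, hζ.pow_eq_one, one_pow]
    rw [this]
    simp

lemma sum_eval_primroot {N : ℕ} (hN : N ≠ 0) {ζ : ℂ} (hζ : IsPrimitiveRoot ζ N)
    (Q : Polynomial ℂ) (hQ : Q.natDegree ≤ N) (hQ0 : Q.coeff 0 = 0) :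
    ∑ j ∈ Finset.range N, Q.eval (ζ^j) = N * Q.coeff N := by
  have hlt : Q.natDegree < N + 1 := Nat.lt_succ_of_le hQ
  calc ∑ j ∈ Finset.range N, Q.eval (ζ^j)
      = ∑ j ∈ Finset.range N, ∑ k ∈ Finset.range (N+1), Q.coeff k * (ζ^k)^j := by
        refine Finset.sum_congr rfl fun j _ => ?_
        rw [Polynomial.eval_eq_sum_range' hlt]
        exact Finset.sum_congr rfl fun k _ => by rw [pow_right_comm]
    _ = ∑ k ∈ Finset.range (N+1), Q.coeff k * ∑ j ∈ Finset.range N, (ζ^k)^j := by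
        rw [Finset.sum_comm]
        exact Finset.sum_congr rfl fun k _ => (Finset.mul_sum _ _ _).symm
    _ = N * Q.coeff N := by
        rw [Finset.sum_eq_single N]
        · rw [sum_geo_primroot hζ N, if_pos dvd_rfl, mul_comm]
        · intro k hk hkN
          rw [sum_geo_primroot hζ k]
          rcases eq_or_ne k 0 with rfl | hk0
          · simp [hQ0]
          · have hkN' : k < N :=
              lt_of_le_of_ne (Nat.lt_succ_iff.mp (Finset.mem_range.mp hk)) hkN
            rw [if_neg, mul_zero]
            exact fun hd => hk0 (Nat.eq_zero_of_dvd_of_lt hd hkN')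
        · intro h
          exact absurd (Finset.self_mem_range_succ N) h

lemma nd_X2add1 : ((X:Polynomial ℂ)^2+1).natDegree = 2 := by
  have : ((X:Polynomial ℂ)^2+1) = X^2 + C 1 := by rw [map_one]
  rw [this, Polynomial.natDegree_X_pow_add_C]

lemma monic_X2add1 : ((X:Polynomial ℂ)^2+1).Monic := by
  have : ((X:Polynomial ℂ)^2+1) = X^2 + C 1 := by rw [map_one]
  rw [this]
  exact Polynomial.monic_X_pow_add_C _ (by norm_num)

noncomputable def auxP (pc : Polynomial ℂ) (n : ℕ) : Polynomial ℂ :=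
  ∑ k ∈ Finset.range (n+1), C (pc.coeff k) * X^(n-k) * (X^2+1)^k

lemma auxP_term_natDegree_le (pc : Polynomial ℂ) (n k : ℕ) (hk : k ≤ n) :
    (C (pc.coeff k) * X^(n-k) * (X^2+1)^k).natDegree ≤ n + k := by
  calc (C (pc.coeff k) * X^(n-k) * (X^2+1)^k).natDegree
      ≤ (C (pc.coeff k) * X^(n-k)).natDegree + ((X^2+1:Polynomial ℂ)^k).natDegree :=
        Polynomial.natDegree_mul_le
    _ ≤ (n-k) + 2*k := by
        gcongr
        · exact (Polynomial.natDegree_C_mul_le _ _).trans (by simp)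
        · calc ((X^2+1:Polynomial ℂ)^k).natDegree ≤ k * (X^2+1:Polynomial ℂ).natDegree :=
              Polynomial.natDegree_pow_le
          _ ≤ 2*k := by rw [nd_X2add1, mul_comm]
    _ ≤ n + k := by omega

lemma auxP_natDegree_le (pc : Polynomial ℂ) (n : ℕ) : (auxP pc n).natDegree ≤ 2*n := by
  refine Polynomial.natDegree_sum_le_of_forall_le _ _ fun k hk => ?_
  have hk' : k ≤ n := Nat.lt_succ_iff.mp (Finset.mem_range.mp hk)
  exact (auxP_term_natDegree_le pc n k hk').trans (by omega)

lemma auxP_coeff (pc : Polynomial ℂ) (n : ℕ) : (auxP pc n).coeff (2*n) = pc.coeff n := by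
  unfold auxP
  rw [Polynomial.finset_sum_coeff]
  rw [Finset.sum_eq_single n]
  · have h1 : (C (pc.coeff n) * X^(n-n) * (X^2+1)^n) = C (pc.coeff n) * (X^2+1)^n := by
      simp
    rw [h1, Polynomial.coeff_C_mul]
    have h2 : ((X^2+1:Polynomial ℂ)^n).coeff (2*n) = 1 := by
      have hm := (monic_X2add1.pow n).coeff_natDegree
      rwa [Polynomial.natDegree_pow, nd_X2add1, mul_comm] at hm
    rw [h2, mul_one]
  · intro k hk hkn
    have hk' : k ≤ n := Nat.lt_succ_iff.mp (Finset.mem_range.mp hk)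
    apply Polynomial.coeff_eq_zero_of_natDegree_lt
    have hd := auxP_term_natDegree_le pc n k hk'
    have : k < n := lt_of_le_of_ne hk' hkn
    omega
  · intro h
    exact absurd (Finset.self_mem_range_succ n) h

lemma auxP_eval (pc : Polynomial ℂ) (n : ℕ) (hdeg : pc.natDegree ≤ n) (z : ℂ) (hz : z ≠ 0) :
    (auxP pc n).eval z = z^n * pc.eval (z + z⁻¹) := by
  unfold auxP
  rw [Polynomial.eval_finset_sum,
    Polynomial.eval_eq_sum_range' (Nat.lt_succ_of_le hdeg), Finset.mul_sum]
  refine Finset.sum_congr rfl fun k hk => ?_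
  have hk' : k ≤ n := Nat.lt_succ_iff.mp (Finset.mem_range.mp hk)
  simp only [Polynomial.eval_mul, Polynomial.eval_C, Polynomial.eval_pow, Polynomial.eval_X,
    Polynomial.eval_add, Polynomial.eval_one]
  have hzz : z^2 + 1 = z * (z + z⁻¹) := by
    field_simp
  rw [hzz, mul_pow, ← mul_assoc, mul_assoc (pc.coeff k), ← pow_add]
  have : n - k + k = n := by omega
  rw [this]
  ring

lemma exists_eval_ge (p : Polynomial ℝ) :
    ∃ x ∈ Set.Icc (-2:ℝ) 2, |p.leadingCoeff| ≤ |p.eval x| := by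
  set n := p.natDegree with hn
  set N := 2 * n + 1 with hNdef
  have hN0 : N ≠ 0 := by omega
  set ζ : ℂ := Complex.exp (2 * Real.pi * Complex.I / N) with hζdef
  have hζ : IsPrimitiveRoot ζ N := Complex.isPrimitiveRoot_exp N hN0
  set pc : Polynomial ℂ := p.map (algebraMap ℝ ℂ) with hpc
  have hdeg : pc.natDegree ≤ n := Polynomial.natDegree_map_le
  set Q : Polynomial ℂ := auxP pc n * X with hQ
  have hQdeg : Q.natDegree ≤ N := by
    calc Q.natDegree ≤ (auxP pc n).natDegree + (X:Polynomial ℂ).natDegree :=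
          Polynomial.natDegree_mul_le
      _ ≤ 2*n + 1 := by
          have := auxP_natDegree_le pc n
          simp only [Polynomial.natDegree_X]
          omega
  have hQ0 : Q.coeff 0 = 0 := Polynomial.coeff_mul_X_zero _
  have hQN : Q.coeff N = (p.leadingCoeff : ℂ) := by
    rw [hQ, hNdef, Polynomial.coeff_mul_X, auxP_coeff, hpc, Polynomial.coeff_map]
    rfl
  have hsum : ∑ j ∈ Finset.range N, Q.eval (ζ^j) = N * (p.leadingCoeff : ℂ) := by
    rw [sum_eval_primroot hN0 hζ Q hQdeg hQ0, hQN]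
  -- abs of each root of unity
  have habs : ∀ j : ℕ, ‖ζ^j‖ = 1 := by
    intro j
    rcases eq_or_ne j 0 with rfl | hj
    · simp
    · have hpow : (ζ^j)^(N*j) = 1 := by
        rw [← pow_mul, mul_comm j (N*j), mul_assoc, pow_mul, hζ.pow_eq_one, one_pow]
      have := Complex.norm_eq_one_of_pow_eq_one hpow (by positivity)
      simpa using this
  -- each eval gives a real point in [-2,2]
  have hpoint : ∀ j : ℕ, ∃ x ∈ Set.Icc (-2:ℝ) 2,
      ‖Q.eval (ζ^j)‖ = |p.eval x| := by
    intro j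
    set z := ζ^j with hz
    have hz1 : ‖z‖ = 1 := habs j
    have hz0 : z ≠ 0 := by
      intro h
      rw [h] at hz1
      simp at hz1
    refine ⟨2 * z.re, ?_, ?_⟩
    · constructor
      · have := Complex.abs_re_le_norm z
        rw [hz1] at this
        have := abs_le.mp this
        linarith [this.1]
      · have := Complex.abs_re_le_norm z
        rw [hz1] at this
        have := abs_le.mp this
        linarith [this.2]
    · have hinv : z⁻¹ = (starRingEnd ℂ) z := by
        have hmc : z * (starRingEnd ℂ) z = 1 := by
          rw [Complex.mul_conj]
          rw [← Complex.sq_norm z, hz1]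
          norm_num
        field_simp [hz0] at hmc ⊢
        rw [← hmc]
      have hre : z + z⁻¹ = ((2 * z.re : ℝ) : ℂ) := by
        rw [hinv, Complex.add_conj]
      have heval : Q.eval z = z^n * pc.eval (z + z⁻¹) * z := by
        rw [hQ, Polynomial.eval_mul, Polynomial.eval_X, auxP_eval pc n hdeg z hz0]
      have hpceval : pc.eval ((2 * z.re : ℝ) : ℂ) = ((p.eval (2 * z.re) : ℝ) : ℂ) := by
        rw [hpc, Polynomial.eval_map]
        exact Polynomial.eval₂_at_apply (algebraMap ℝ ℂ) _
      rw [heval, hre, hpceval]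
      rw [norm_mul, norm_mul, norm_pow, hz1, one_pow, one_mul, mul_one, Complex.norm_real, Real.norm_eq_abs]
  -- average argument
  have hsum_le : (N : ℝ) * |p.leadingCoeff| ≤
      ∑ j ∈ Finset.range N, ‖Q.eval (ζ^j)‖ := by
    calc (N : ℝ) * |p.leadingCoeff| = ‖(N * (p.leadingCoeff : ℂ))‖ := by
          rw [norm_mul, Complex.norm_natCast, Complex.norm_real, Real.norm_eq_abs]
      _ = ‖(∑ j ∈ Finset.range N, Q.eval (ζ^j))‖ := by rw [hsum]
      _ ≤ ∑ j ∈ Finset.range N, ‖Q.eval (ζ^j)‖ :=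
          norm_sum_le _ _
  have hconst : ∑ _j ∈ Finset.range N, |p.leadingCoeff| = (N:ℝ) * |p.leadingCoeff| := by
    rw [Finset.sum_const, Finset.card_range, nsmul_eq_mul]
  obtain ⟨j, _, hj⟩ := Finset.exists_le_of_sum_le
    (f := fun _ => |p.leadingCoeff|) (g := fun j => ‖Q.eval (ζ^j)‖)
    (Finset.nonempty_range_iff.mpr hN0) (hconst ▸ hsum_le)
  obtain ⟨x, hx, hxe⟩ := hpoint j
  exact ⟨x, hx, by rwa [hxe] at hj⟩

lemma exists_aeval_ge (a b : ℝ) (hab : b - a > 4) (p : Polynomial ℤ) (hp : p ≠ 0) :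
    ∃ x ∈ Set.Icc a b, 1 ≤ |Polynomial.aeval x p| := by
  set m : ℝ := (a+b)/2 with hm
  set r : ℝ := (b-a)/4 with hr
  have hr1 : 1 < r := by rw [hr]; linarith
  have hr0 : r ≠ 0 := by linarith
  set pr : Polynomial ℝ := p.map (Int.castRingHom ℝ) with hpr
  have hinj : Function.Injective ((Int.castRingHom ℝ) : ℤ →+* ℝ) := Int.cast_injective
  have hpr0 : pr ≠ 0 := (Polynomial.map_ne_zero_iff hinj).mpr hp
  set ℓ : Polynomial ℝ := C r * X + C m with hℓ
  have hℓdeg : ℓ.natDegree = 1 := Polynomial.natDegree_linear hr0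
  set q : Polynomial ℝ := pr.comp ℓ with hq
  have hlead : 1 ≤ |q.leadingCoeff| := by
    rw [hq, Polynomial.leadingCoeff_comp (by rw [hℓdeg]; norm_num),
      Polynomial.leadingCoeff_linear hr0,
      Polynomial.leadingCoeff_map_of_injective hinj]
    rw [abs_mul, abs_pow]
    have h1 : (1:ℝ) ≤ |((Int.castRingHom ℝ) p.leadingCoeff)| := by
      have hne : p.leadingCoeff ≠ 0 := Polynomial.leadingCoeff_ne_zero.mpr hp
      have h := Int.one_le_abs hne
      rw [show ((Int.castRingHom ℝ) p.leadingCoeff) = ((p.leadingCoeff : ℝ)) from rfl,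
        ← Int.cast_abs]
      exact_mod_cast h
    have hr1' : (1:ℝ) ≤ |r| := by
      rw [abs_of_pos (by linarith : (0:ℝ) < r)]; linarith
    have h2 : (1:ℝ) ≤ |r| ^ pr.natDegree := by
      simpa using pow_le_pow_left₀ zero_le_one hr1' pr.natDegree
    calc (1:ℝ) = 1 * 1 := (one_mul 1).symm
      _ ≤ _ := mul_le_mul h1 h2 zero_le_one (le_trans zero_le_one h1)
  obtain ⟨t, ht, hqt⟩ := exists_eval_ge q
  refine ⟨m + r * t, ⟨?_, ?_⟩, ?_⟩
  · obtain ⟨ht1, ht2⟩ := ht; nlinarith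
  · obtain ⟨ht1, ht2⟩ := ht; nlinarith
  · have heq : q.eval t = Polynomial.aeval (m + r * t) p := by
      rw [hq, Polynomial.eval_comp, hℓ]
      simp only [Polynomial.eval_add, Polynomial.eval_mul, Polynomial.eval_C, Polynomial.eval_X]
      rw [hpr, Polynomial.eval_map, Polynomial.aeval_def]
      norm_num [add_comm]
    rw [heq] at hqt
    exact le_trans hlead hqt

/-- The supremum norm of an integer polynomial on the interval `[a, b]`. -/
noncomputable def supNorm (p : Polynomial ℤ) (a b : ℝ) : ℝ :=
  sSup ((fun x => |Polynomial.aeval x p|) '' Set.Icc a b)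

/-- `tZ n a b` is the infimum over nonzero integer polynomials `p` of degree at most `n`
of `(sup_{x ∈ [a,b]} |p(x)|)^(1/n)`. -/
noncomputable def tZ (n : ℕ) (a b : ℝ) : ℝ :=
  sInf {r : ℝ | ∃ p : Polynomial ℤ, p ≠ 0 ∧ p.natDegree ≤ n ∧
    r = supNorm p a b ^ ((1 : ℝ) / n)}

theorem stmt_4 (a b : ℝ) (hab : b - a > 4) :
    (∀ p : Polynomial ℤ, p ≠ 0 → 1 ≤ supNorm p a b) ∧
      (∀ n : ℕ, 0 < n → tZ n a b = 1) := by
  have key : ∀ p : Polynomial ℤ, p ≠ 0 → 1 ≤ supNorm p a b := by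
    intro p hp
    obtain ⟨x, hx, h1⟩ := exists_aeval_ge a b hab p hp
    have hcont : Continuous fun x : ℝ => |Polynomial.aeval x p| :=
      (Polynomial.continuous_aeval p).abs
    have hbdd : BddAbove ((fun x => |Polynomial.aeval x p|) '' Set.Icc a b) :=
      (isCompact_Icc.image hcont).bddAbove
    exact le_trans h1 (le_csSup hbdd (Set.mem_image_of_mem _ hx))
  refine ⟨key, fun n hn => ?_⟩
  have hab' : a ≤ b := by linarith
  have hone : supNorm 1 a b = 1 := by
    unfold _root_.supNorm
    have him : (fun x : ℝ => |Polynomial.aeval x (1 : Polynomial ℤ)|) '' Set.Icc a b = {1} := by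
      simp only [map_one, abs_one]
      exact (Set.nonempty_Icc.mpr hab').image_const 1
    rw [him, csSup_singleton]
  have hmem1 : (1:ℝ) ∈ {r : ℝ | ∃ p : Polynomial ℤ, p ≠ 0 ∧ p.natDegree ≤ n ∧
      r = supNorm p a b ^ ((1 : ℝ) / n)} :=
    ⟨1, one_ne_zero, by simp, by rw [hone, Real.one_rpow]⟩
  have hlb : ∀ r ∈ {r : ℝ | ∃ p : Polynomial ℤ, p ≠ 0 ∧ p.natDegree ≤ n ∧
      r = supNorm p a b ^ ((1 : ℝ) / n)}, (1:ℝ) ≤ r := by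
    rintro r ⟨p, hp, _, rfl⟩
    exact Real.one_le_rpow (key p hp) (by positivity)
  exact le_antisymm (csInf_le ⟨1, hlb⟩ hmem1) (le_csInf ⟨1, hmem1⟩ hlb)
end

section
/- If p is an integer Chebyshev polynomial of degree n for the interval [0,1/4] (that is, p has integer coefficients, degree n, and (sup_{y∈[0,1/4]} |p(y)|)^{1/n} = t_{ℤ,n}([0,1/4])), then the polynomial q(x) = p(x(1−x)) is an integer Chebyshev polynomial of degree 2n for the interval [0,1], i.e. (sup_{x∈[0,1]} |q(x)|)^{1/(2n)} = t_{ℤ,2n}([0,1]). -/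
open Polynomial Filter

private lemma contAbs (p : Polynomial ℤ) : Continuous fun x : ℝ => |Polynomial.aeval x p| :=
  (p.continuous_aeval).abs

private lemma supNorm_bdd (p : Polynomial ℤ) (a b : ℝ) :
    BddAbove ((fun x => |Polynomial.aeval x p|) '' Set.Icc a b) :=
  (isCompact_Icc.image (contAbs p)).bddAbove

private lemma le_supNorm (p : Polynomial ℤ) {a b x : ℝ} (hx : x ∈ Set.Icc a b) :
    |Polynomial.aeval x p| ≤ supNorm p a b :=
  le_csSup (supNorm_bdd p a b) ⟨x, hx, rfl⟩

private lemma supNorm_nonneg (p : Polynomial ℤ) {a b : ℝ} (hab : a ≤ b) :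
    0 ≤ supNorm p a b :=
  le_trans (abs_nonneg _) (le_supNorm p ⟨le_refl a, hab⟩)

private lemma supNorm_le (p : Polynomial ℤ) {a b K : ℝ} (hab : a ≤ b)
    (h : ∀ x ∈ Set.Icc a b, |Polynomial.aeval x p| ≤ K) : supNorm p a b ≤ K := by
  have hne : ((fun x => |Polynomial.aeval x p|) '' Set.Icc a b).Nonempty :=
    ⟨_, ⟨a, ⟨le_refl a, hab⟩, rfl⟩⟩
  apply csSup_le hne
  rintro v ⟨x, hx, rfl⟩
  exact h x hx

private lemma u_natDegree : (X * (1 - X) : Polynomial ℤ).natDegree = 2 := by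
  have h1 : (1 - X : Polynomial ℤ).natDegree = 1 := by
    have : (1 - X : Polynomial ℤ) = -(X - C 1) := by rw [C_1]; ring
    rw [this, natDegree_neg, natDegree_X_sub_C]
  have h2 : (1 - X : Polynomial ℤ) ≠ 0 := by
    intro h; rw [h] at h1; simp at h1
  rw [natDegree_mul X_ne_zero h2, natDegree_X, h1]

private lemma u_ne_C (c : ℤ) : (X * (1 - X) : Polynomial ℤ) ≠ C c := by
  intro h
  have := congrArg Polynomial.natDegree h
  rw [u_natDegree, natDegree_C] at this
  exact (by omega : (2 : ℕ) ≠ 0) this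

private lemma exists_decomp (r : Polynomial ℤ) :
    ∃ A B : Polynomial ℤ, r = A.comp (X * (1 - X)) + X * B.comp (X * (1 - X)) := by
  suffices H : ∀ N (r : Polynomial ℤ), r.natDegree ≤ N →
      ∃ A B : Polynomial ℤ, r = A.comp (X * (1 - X)) + X * B.comp (X * (1 - X)) from
    H r.natDegree r le_rfl
  intro N
  induction N using Nat.strong_induction_on with
  | _ N ih =>
    intro r hr
    by_cases h1 : r.natDegree ≤ 1
    · refine ⟨C (r.coeff 0), C (r.coeff 1), ?_⟩
      rw [C_comp, C_comp]
      conv_lhs => rw [r.eq_X_add_C_of_natDegree_le_one h1]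
      ring
    · push_neg at h1
      have hg : (X ^ 2 - X : Polynomial ℤ).Monic := by
        apply monic_X_pow_sub (n := 2)
        rw [degree_X]
        exact_mod_cast (by norm_num : (1 : ℕ) < 2)
      have hgd : (X ^ 2 - X : Polynomial ℤ).degree = ((2 : ℕ) : WithBot ℕ) := by
        have hlt1 : (X : Polynomial ℤ).degree < ((X : Polynomial ℤ) ^ 2).degree := by
          rw [degree_X, degree_X_pow]
          exact_mod_cast (by norm_num : (1 : ℕ) < 2)
        rw [degree_sub_eq_left_of_degree_lt hlt1, degree_X_pow]
      have hgnd : (X ^ 2 - X : Polynomial ℤ).natDegree = 2 :=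
        natDegree_eq_of_degree_eq_some hgd
      have hq : (r /ₘ (X ^ 2 - X)).natDegree ≤ N - 2 := by
        rw [natDegree_divByMonic r hg, hgnd]
        omega
      obtain ⟨A₁, B₁, hAB⟩ := ih (N - 2) (by omega) _ hq
      have hrem : (r %ₘ (X ^ 2 - X)).natDegree ≤ 1 := by
        by_cases hz : r %ₘ (X ^ 2 - X) = 0
        · rw [hz]; simp
        · have hlt := degree_modByMonic_lt r hg
          rw [hgd] at hlt
          have h5 : (r %ₘ (X ^ 2 - X)).natDegree < 2 :=
            (natDegree_lt_iff_degree_lt hz).mpr hlt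
          omega
      refine ⟨C ((r %ₘ (X ^ 2 - X)).coeff 0) - X * A₁,
              C ((r %ₘ (X ^ 2 - X)).coeff 1) - X * B₁, ?_⟩
      have hsplit : r = (X ^ 2 - X) * (r /ₘ (X ^ 2 - X)) + r %ₘ (X ^ 2 - X) := by
        conv_lhs => rw [← modByMonic_add_div r (X ^ 2 - X)]
        ring
      rw [sub_comp, C_comp, mul_comp, X_comp, sub_comp, C_comp, mul_comp, X_comp]
      conv_lhs => rw [hsplit, hAB,
        (r %ₘ (X ^ 2 - X)).eq_X_add_C_of_natDegree_le_one hrem]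
      ring

private lemma abs_le_max_of_between {l m r : ℝ} (h1 : l ≤ m) (h2 : m ≤ r) :
    |m| ≤ max |l| |r| := by
  rcases le_total 0 m with h | h
  · rw [abs_of_nonneg h]
    exact le_trans h2 (le_trans (le_abs_self r) (le_max_right _ _))
  · rw [abs_of_nonpos h]
    exact le_trans (neg_le_neg h1) (le_trans (neg_le_abs l) (le_max_left _ _))

private lemma abs_affine_le {a b c d t : ℝ} (h1 : c ≤ t) (h2 : t ≤ d) :
    |a + t * b| ≤ max |a + c * b| |a + d * b| := by
  rcases le_total 0 b with hb | hb
  · exact abs_le_max_of_between (by nlinarith) (by nlinarith)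
  · rw [max_comm]
    exact abs_le_max_of_between (by nlinarith) (by nlinarith)

private lemma exists_G {n : ℕ} (hn : 0 < n) {r : Polynomial ℤ} (hr0 : r ≠ 0)
    (hrdeg : r.natDegree ≤ 2 * n) :
    ∃ G : Polynomial ℤ, G ≠ 0 ∧ G.natDegree ≤ n ∧
      ∀ y ∈ Set.Icc (0 : ℝ) (1 / 4), |Polynomial.aeval y G| ≤ supNorm r 0 1 := by
  obtain ⟨A, B, hAB⟩ := exists_decomp r
  -- degree bounds
  have hcompA : (A.comp (X * (1 - X))).natDegree = 2 * A.natDegree := by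
    rw [natDegree_comp, u_natDegree, Nat.mul_comm]
  have hdegs : A.natDegree ≤ n ∧ (B = 0 ∨ B.natDegree + 1 ≤ n) := by
    by_cases hB : B = 0
    · have hA0 : A ≠ 0 := by
        intro h; apply hr0; rw [hAB, hB, h]; simp
      have hr' : r.natDegree = 2 * A.natDegree := by
        rw [hAB, hB]; simpa using hcompA
      exact ⟨by omega, Or.inl hB⟩
    · have hBc : B.comp (X * (1 - X)) ≠ 0 := by
        intro h
        rcases comp_eq_zero_iff.mp h with h' | ⟨-, h'⟩
        · exact hB h'
        · exact u_ne_C _ h'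
      have hXB : (X * B.comp (X * (1 - X))).natDegree = 2 * B.natDegree + 1 := by
        rw [natDegree_mul X_ne_zero hBc, natDegree_X, natDegree_comp, u_natDegree]
        ring
      by_cases hA : A = 0
      · have hr' : r.natDegree = 2 * B.natDegree + 1 := by
          rw [hAB, hA, zero_comp, zero_add, hXB]
        refine ⟨by rw [hA]; simp, Or.inr (by omega)⟩
      · have hAc : A.comp (X * (1 - X)) ≠ 0 := by
          intro h
          rcases comp_eq_zero_iff.mp h with h' | ⟨-, h'⟩
          · exact hA h'
          · exact u_ne_C _ h'
        have hne : (A.comp (X * (1 - X))).natDegree ≠ (X * B.comp (X * (1 - X))).natDegree := by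
          rw [hcompA, hXB]; omega
        have hboth : 2 * A.natDegree ≤ 2 * n ∧ 2 * B.natDegree + 1 ≤ 2 * n := by
          rcases lt_or_gt_of_ne hne with h | h
          · have := natDegree_add_eq_right_of_natDegree_lt h
            rw [hAB] at hrdeg
            rw [this] at hrdeg
            rw [hXB] at hrdeg
            rw [hcompA, hXB] at h
            omega
          · have := natDegree_add_eq_left_of_natDegree_lt h
            rw [hAB] at hrdeg
            rw [this] at hrdeg
            rw [hcompA] at hrdeg
            rw [hcompA, hXB] at h
            omega
        exact ⟨by omega, Or.inr (by omega)⟩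
  obtain ⟨hdA, hdB⟩ := hdegs
  have hd2XB : (2 * X * B : Polynomial ℤ).natDegree ≤ n := by
    rcases hdB with h | h
    · rw [h, mul_zero]; simp
    · refine le_trans (natDegree_mul_le) ?_
      have h2X : (2 * X : Polynomial ℤ).natDegree ≤ 1 :=
        le_trans natDegree_mul_le (by simp)
      omega
  have hdBn : B.natDegree ≤ n := by
    rcases hdB with h | h
    · rw [h]; simp
    · omega
  -- the key pointwise bound
  have hkey : ∀ y ∈ Set.Icc (0 : ℝ) (1 / 4),
      |Polynomial.aeval y A + 2 * y * Polynomial.aeval y B| ≤ supNorm r 0 1 ∧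
      |Polynomial.aeval y A + (1 - 2 * y) * Polynomial.aeval y B| ≤ supNorm r 0 1 := by
    intro y hy
    obtain ⟨hy0, hy4⟩ := hy
    set s := Real.sqrt (1 - 4 * y) with hs
    have h14 : (0 : ℝ) ≤ 1 - 4 * y := by linarith
    have hs0 : 0 ≤ s := Real.sqrt_nonneg _
    have hs1 : s ≤ 1 := Real.sqrt_le_one.mpr (by linarith)
    have hs2 : s ^ 2 = 1 - 4 * y := Real.sq_sqrt h14
    have hx₁ : ((1 - s) / 2 : ℝ) ∈ Set.Icc (0 : ℝ) 1 := ⟨by linarith, by linarith⟩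
    have hx₂ : ((1 + s) / 2 : ℝ) ∈ Set.Icc (0 : ℝ) 1 := ⟨by linarith, by linarith⟩
    have hux₁ : (Polynomial.aeval ((1 - s) / 2 : ℝ)) ((X : Polynomial ℤ) * (1 - X)) = y := by
      rw [map_mul, map_sub, aeval_X, map_one]
      linear_combination (-(1 : ℝ) / 4) * hs2
    have hux₂ : (Polynomial.aeval ((1 + s) / 2 : ℝ)) ((X : Polynomial ℤ) * (1 - X)) = y := by
      rw [map_mul, map_sub, aeval_X, map_one]
      linear_combination (-(1 : ℝ) / 4) * hs2
    have e₁ : Polynomial.aeval ((1 - s) / 2 : ℝ) r =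
        Polynomial.aeval y A + (1 - s) / 2 * Polynomial.aeval y B := by
      rw [hAB, map_add, map_mul, aeval_X, aeval_comp, aeval_comp, hux₁]
    have e₂ : Polynomial.aeval ((1 + s) / 2 : ℝ) r =
        Polynomial.aeval y A + (1 + s) / 2 * Polynomial.aeval y B := by
      rw [hAB, map_add, map_mul, aeval_X, aeval_comp, aeval_comp, hux₂]
    have b₁ : |Polynomial.aeval ((1 - s) / 2 : ℝ) r| ≤ supNorm r 0 1 := le_supNorm r hx₁
    have b₂ : |Polynomial.aeval ((1 + s) / 2 : ℝ) r| ≤ supNorm r 0 1 := le_supNorm r hx₂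
    have hmax : max |Polynomial.aeval y A + (1 - s) / 2 * Polynomial.aeval y B|
        |Polynomial.aeval y A + (1 + s) / 2 * Polynomial.aeval y B| ≤ supNorm r 0 1 := by
      rw [← e₁, ← e₂]; exact max_le b₁ b₂
    constructor
    · refine le_trans (abs_affine_le ?_ ?_) hmax
      · nlinarith [mul_nonneg hs0 (sub_nonneg.mpr hs1)]
      · nlinarith [sq_nonneg s, hs0]
    · refine le_trans (abs_affine_le ?_ ?_) hmax
      · nlinarith [sq_nonneg s, hs0]
      · nlinarith [mul_nonneg hs0 (sub_nonneg.mpr hs1)]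
  by_cases hG1 : A + 2 * X * B = 0
  · refine ⟨A + B - 2 * X * B, ?_, ?_, ?_⟩
    · intro h0
      have h4 : (4 * X - 1 : Polynomial ℤ) * B = 0 := by
        have : (4 * X - 1 : Polynomial ℤ) * B = (A + 2 * X * B) - (A + B - 2 * X * B) := by
          ring
        rw [hG1, h0] at this
        simpa using this
      have hB : B = 0 := by
        rcases mul_eq_zero.mp h4 with h | h
        · exfalso
          have := congrArg (Polynomial.eval 0) h
          simp at this
        · exact h
      rw [hB, mul_zero, add_zero] at hG1
      apply hr0
      rw [hAB, hG1, hB]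
      simp
    · refine le_trans (natDegree_sub_le _ _) (max_le ?_ hd2XB)
      exact le_trans (natDegree_add_le _ _) (max_le hdA hdBn)
    · intro y hy
      have e : (Polynomial.aeval y) (A + B - 2 * X * B) =
          Polynomial.aeval y A + (1 - 2 * y) * Polynomial.aeval y B := by
        rw [map_sub, map_add, map_mul, map_mul, map_ofNat, aeval_X]
        ring
      rw [e]
      exact (hkey y hy).2
  · refine ⟨A + 2 * X * B, hG1, ?_, ?_⟩
    · exact le_trans (natDegree_add_le _ _) (max_le hdA hd2XB)
    · intro y hy
      have e : (Polynomial.aeval y) (A + 2 * X * B) =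
          Polynomial.aeval y A + 2 * y * Polynomial.aeval y B := by
        rw [map_add, map_mul, map_mul, map_ofNat, aeval_X]
      rw [e]
      exact (hkey y hy).1

private lemma tZ_bddBelow (n : ℕ) (a b : ℝ) (hab : a ≤ b) :
    BddBelow {r : ℝ | ∃ p : Polynomial ℤ, p ≠ 0 ∧ p.natDegree ≤ n ∧
      r = supNorm p a b ^ ((1 : ℝ) / n)} := by
  refine ⟨0, ?_⟩
  rintro x ⟨p, -, -, rfl⟩
  exact Real.rpow_nonneg (supNorm_nonneg p hab) _

theorem stmt_6 (n : ℕ) (hn : 0 < n) (p : Polynomial ℤ) (hp0 : p ≠ 0)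
    (hdeg : p.natDegree = n)
    (hcheb : supNorm p 0 (1 / 4) ^ ((1 : ℝ) / n) = tZ n 0 (1 / 4)) :
    supNorm (p.comp (Polynomial.X * (1 - Polynomial.X))) 0 1 ^ ((1 : ℝ) / (2 * n)) =
      tZ (2 * n) 0 1 := by
  have hn' : ((n : ℝ)) ≠ 0 := Nat.cast_ne_zero.mpr hn.ne'
  have hqdeg : (p.comp (X * (1 - X))).natDegree = 2 * n := by
    rw [natDegree_comp, u_natDegree, hdeg, Nat.mul_comm]
  have hq0 : p.comp (X * (1 - X)) ≠ 0 := by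
    intro h
    rw [h, natDegree_zero] at hqdeg
    omega
  have hM0 : (0 : ℝ) ≤ supNorm p 0 (1 / 4) := supNorm_nonneg p (by norm_num)
  -- sup equality
  have hqsup : supNorm (p.comp (X * (1 - X))) 0 1 = supNorm p 0 (1 / 4) := by
    apply le_antisymm
    · apply supNorm_le _ (by norm_num)
      intro x hx
      obtain ⟨hx0, hx1⟩ := hx
      have hmem : x * (1 - x) ∈ Set.Icc (0 : ℝ) (1 / 4) :=
        ⟨mul_nonneg hx0 (by linarith), by nlinarith [sq_nonneg (x - 1 / 2)]⟩
      have e : Polynomial.aeval x (p.comp (X * (1 - X))) = Polynomial.aeval (x * (1 - x)) p := by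
        rw [aeval_comp, map_mul, map_sub, aeval_X, map_one]
      rw [e]
      exact le_supNorm p hmem
    · apply supNorm_le _ (by norm_num)
      intro y hy
      obtain ⟨hy0, hy4⟩ := hy
      set s := Real.sqrt (1 - 4 * y) with hs
      have h14 : (0 : ℝ) ≤ 1 - 4 * y := by linarith
      have hs0 : 0 ≤ s := Real.sqrt_nonneg _
      have hs1 : s ≤ 1 := Real.sqrt_le_one.mpr (by linarith)
      have hs2 : s ^ 2 = 1 - 4 * y := Real.sq_sqrt h14
      have hx₁ : ((1 - s) / 2 : ℝ) ∈ Set.Icc (0 : ℝ) 1 := ⟨by linarith, by linarith⟩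
      have hux : (Polynomial.aeval ((1 - s) / 2 : ℝ)) ((X : Polynomial ℤ) * (1 - X)) = y := by
        rw [map_mul, map_sub, aeval_X, map_one]
        linear_combination (-(1 : ℝ) / 4) * hs2
      have e : Polynomial.aeval ((1 - s) / 2 : ℝ) (p.comp (X * (1 - X))) =
          Polynomial.aeval y p := by
        rw [aeval_comp, hux]
      rw [← e]
      exact le_supNorm _ hx₁
  have hexp : ((1 : ℝ) / (2 * (n : ℝ))) = (1 : ℝ) / ((2 * n : ℕ) : ℝ) := by
    push_cast; ring
  rw [hqsup]
  have hmem2 : supNorm p 0 (1 / 4) ^ ((1 : ℝ) / ((2 * n : ℕ) : ℝ)) ∈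
      {r : ℝ | ∃ g : Polynomial ℤ, g ≠ 0 ∧ g.natDegree ≤ 2 * n ∧
        r = supNorm g 0 1 ^ ((1 : ℝ) / ((2 * n : ℕ) : ℝ))} :=
    ⟨p.comp (X * (1 - X)), hq0, le_of_eq hqdeg, by rw [hqsup]⟩
  have hbdd2 := tZ_bddBelow (2 * n) 0 1 (by norm_num)
  rw [hexp]
  apply le_antisymm
  · apply le_csInf ⟨_, hmem2⟩
    rintro b ⟨r, hr0, hrdeg, rfl⟩
    have hMr : supNorm p 0 (1 / 4) ≤ supNorm r 0 1 := by
      obtain ⟨G, hG0, hGdeg, hGb⟩ := exists_G hn hr0 hrdeg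
      have h1 : supNorm G 0 (1 / 4) ≤ supNorm r 0 1 := supNorm_le _ (by norm_num) hGb
      have hGnn : (0 : ℝ) ≤ supNorm G 0 (1 / 4) := supNorm_nonneg G (by norm_num)
      have h3 : tZ n 0 (1 / 4) ≤ supNorm G 0 (1 / 4) ^ ((1 : ℝ) / n) :=
        csInf_le (tZ_bddBelow n 0 (1 / 4) (by norm_num)) ⟨G, hG0, hGdeg, rfl⟩
      rw [← hcheb] at h3
      have h4 := Real.rpow_le_rpow (Real.rpow_nonneg hM0 _) h3
        (le_of_lt (by exact_mod_cast hn : (0 : ℝ) < n))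
      rw [← Real.rpow_mul hM0, ← Real.rpow_mul hGnn,
        one_div_mul_cancel hn', Real.rpow_one, Real.rpow_one] at h4
      exact le_trans h4 h1
    exact Real.rpow_le_rpow hM0 hMr (by positivity)
  · exact csInf_le hbdd2 hmem2
end

section
/- For every even positive integer n there exists a symmetric integer Chebyshev polynomial of degree n on [0,1]: a nonzero polynomial p with integer coefficients, deg p ≤ n, satisfying p(x) = p(1−x) for all x, such that (sup_{x∈[0,1]} |p(x)|)^{1/n} = t_{ℤ,n}([0,1]). -/
open Polynomial Filter

namespace StmtAux

lemma bddAbove_img (p : Polynomial ℤ) :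
    BddAbove ((fun x : ℝ => |Polynomial.aeval x p|) '' Set.Icc 0 1) :=
  (isCompact_Icc.image p.continuous_aeval.abs).bddAbove

lemma le_supNorm (p : Polynomial ℤ) {x : ℝ} (hx : x ∈ Set.Icc (0:ℝ) 1) :
    |Polynomial.aeval x p| ≤ supNorm p 0 1 :=
  le_csSup (bddAbove_img p) ⟨x, hx, rfl⟩

lemma supNorm_nonneg (p : Polynomial ℤ) : 0 ≤ supNorm p 0 1 :=
  le_trans (abs_nonneg _) (le_supNorm p (x := 0) (by norm_num))

lemma supNorm_le (p : Polynomial ℤ) {c : ℝ}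
    (h : ∀ x ∈ Set.Icc (0:ℝ) 1, |Polynomial.aeval x p| ≤ c) :
    supNorm p 0 1 ≤ c :=
  csSup_le ⟨_, ⟨0, by norm_num, rfl⟩⟩ (by rintro r ⟨x, hx, rfl⟩; exact h x hx)

/-- the symmetrization `(1-x)Q(x) + xQ(1-x)` -/
noncomputable def fsym (Q : Polynomial ℤ) : Polynomial ℤ :=
  (1 - X) * Q + X * (Q.comp (1 - X))

lemma comp_comp (Q : Polynomial ℤ) : (Q.comp (1 - X)).comp (1 - X) = Q := by
  rw [comp_assoc]
  simp

lemma fsym_comp (Q : Polynomial ℤ) : (fsym Q).comp (1 - X) = fsym Q := by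
  have h : ((1:Polynomial ℤ) - X).comp (1 - X) = X := by simp [sub_comp]
  unfold fsym
  rw [add_comp, mul_comp, mul_comp, comp_assoc, h, X_comp, comp_X]
  ring

lemma aeval_one_sub_comp (P : Polynomial ℤ) (x : ℝ) :
    Polynomial.aeval x (P.comp (1 - X)) = Polynomial.aeval (1 - x) P := by
  rw [aeval_comp]
  simp

lemma natDegree_one_sub_X : (1 - X : Polynomial ℤ).natDegree = 1 := by
  have : (1 - X : Polynomial ℤ) = -(X - C 1) := by rw [C_1]; ring
  rw [this, natDegree_neg, natDegree_X_sub_C]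

lemma leadingCoeff_one_sub_X : (1 - X : Polynomial ℤ).leadingCoeff = -1 := by
  have : (1 - X : Polynomial ℤ) = -(X - C 1) := by rw [C_1]; ring
  rw [this, leadingCoeff_neg, (monic_X_sub_C (1:ℤ)).leadingCoeff]


lemma fsym_natDegree {n : ℕ} (heven : Even n) {Q : Polynomial ℤ}
    (hQ : Q.natDegree ≤ n) : (fsym Q).natDegree ≤ n := by
  have hcomp : (Q.comp (1 - X)).natDegree ≤ n := by
    calc (Q.comp (1 - X)).natDegree ≤ Q.natDegree * (1 - X : Polynomial ℤ).natDegree :=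
          natDegree_comp_le
      _ ≤ n := by rw [natDegree_one_sub_X, mul_one]; exact hQ
  have hle : (fsym Q).natDegree ≤ n + 1 := by
    refine le_trans (natDegree_add_le _ _) (max_le ?_ ?_)
    · refine le_trans (natDegree_mul_le) ?_
      rw [natDegree_one_sub_X]
      omega
    · refine le_trans (natDegree_mul_le) ?_
      rw [natDegree_X]
      omega
  rcases lt_or_eq_of_le hle with h | h
  · omega
  · exfalso
    have hne : fsym Q ≠ 0 := by
      intro h0
      rw [h0, natDegree_zero] at h
      omega
    have hc := coeff_comp_degree_mul_degree (p := fsym Q) (q := 1 - X)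
      (by rw [natDegree_one_sub_X]; exact one_ne_zero)
    rw [fsym_comp, natDegree_one_sub_X, mul_one, leadingCoeff_one_sub_X, h] at hc
    have hodd : Odd (n + 1) := Even.add_one heven
    rw [hodd.neg_one_pow] at hc
    have hlc : (fsym Q).leadingCoeff = (fsym Q).coeff (n + 1) := by
      rw [Polynomial.leadingCoeff, h]
    rw [← hlc] at hc
    have : (fsym Q).leadingCoeff = 0 := by omega
    exact hne (leadingCoeff_eq_zero.mp this)

lemma aeval_fsym (Q : Polynomial ℤ) (x : ℝ) :
    Polynomial.aeval x (fsym Q) =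
      (1 - x) * Polynomial.aeval x Q + x * Polynomial.aeval (1 - x) Q := by
  unfold fsym
  rw [map_add, map_mul, map_mul, aeval_one_sub_comp]
  simp

lemma fsym_symm (Q : Polynomial ℤ) (x : ℝ) :
    Polynomial.aeval x (fsym Q) = Polynomial.aeval (1 - x) (fsym Q) := by
  conv_lhs => rw [← fsym_comp Q]
  rw [aeval_one_sub_comp]

lemma fsym_supNorm_le (Q : Polynomial ℤ) : supNorm (fsym Q) 0 1 ≤ supNorm Q 0 1 := by
  refine supNorm_le _ (fun x hx => ?_)
  obtain ⟨hx0, hx1⟩ := hx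
  have hx' : (1 : ℝ) - x ∈ Set.Icc (0:ℝ) 1 := by constructor <;> linarith
  rw [aeval_fsym]
  calc |(1 - x) * Polynomial.aeval x Q + x * Polynomial.aeval (1 - x) Q|
      ≤ |(1 - x) * Polynomial.aeval x Q| + |x * Polynomial.aeval (1 - x) Q| := abs_add_le _ _
    _ = (1 - x) * |Polynomial.aeval x Q| + x * |Polynomial.aeval (1 - x) Q| := by
        rw [abs_mul, abs_mul, abs_of_nonneg (by linarith : (0:ℝ) ≤ 1 - x),
          abs_of_nonneg hx0]
    _ ≤ (1 - x) * supNorm Q 0 1 + x * supNorm Q 0 1 := by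
        gcongr
        · exact le_supNorm Q ⟨hx0, hx1⟩
        · exact le_supNorm Q hx'
    _ = supNorm Q 0 1 := by ring

lemma supNorm_comp_le (Q : Polynomial ℤ) :
    supNorm (Q.comp (1 - X)) 0 1 ≤ supNorm Q 0 1 := by
  refine supNorm_le _ (fun x hx => ?_)
  rw [aeval_one_sub_comp]
  exact le_supNorm Q ⟨by linarith [hx.2], by linarith [hx.1]⟩

lemma fsym_ne (Q : Polynomial ℤ) (h1 : fsym Q = 0) (h2 : fsym (Q.comp (1 - X)) = 0) :
    Q = 0 := by
  unfold fsym at h1 h2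
  rw [comp_comp] at h2
  have hsum : Q + Q.comp (1 - X) = 0 := by linear_combination h1 + h2
  have h3 : (1 - 2 * X) * Q = 0 := by linear_combination h1 - X * hsum
  rcases mul_eq_zero.mp h3 with h | h
  · exfalso
    have := congrArg (fun p => Polynomial.coeff p 1) h
    simp only [coeff_sub, coeff_one, coeff_ofNat_mul, coeff_X_one, coeff_zero] at this
    norm_num at this
  · exact h


lemma finite_small (n : ℕ) :
    {p : Polynomial ℤ | p.natDegree ≤ n ∧ supNorm p 0 1 ≤ 1}.Finite := by
  classical
  have hN : (0:ℝ) < (n:ℝ) + 1 := by positivity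
  set S : Set ℝ := (fun z : ℤ => (z : ℝ) / ((n:ℝ) + 1) ^ n) ''
    (Set.Icc (-(((n:ℤ) + 1) ^ n)) (((n:ℤ) + 1) ^ n)) with hS
  have hSfin : S.Finite := (Set.finite_Icc _ _).image _
  set Φ : Polynomial ℤ → (Fin (n+1) → ℝ) :=
    fun p i => Polynomial.aeval ((i : ℝ)/((n:ℝ)+1)) p with hΦ
  apply Set.Finite.of_finite_image (f := Φ)
  · refine Set.Finite.subset (Set.Finite.pi (fun _ : Fin (n+1) => hSfin)) ?_
    rintro _ ⟨p, ⟨hdeg, hnorm⟩, rfl⟩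
    rw [Set.mem_univ_pi]
    intro i
    set t : ℝ := (i : ℝ)/((n:ℝ)+1) with ht
    have hti : t ∈ Set.Icc (0:ℝ) 1 := by
      constructor
      · positivity
      · rw [ht, div_le_one hN]
        have := i.isLt
        exact_mod_cast Nat.le_of_lt_succ (Nat.lt_succ_of_lt (by exact_mod_cast i.isLt))
    have hval : |Polynomial.aeval t p| ≤ 1 := le_trans (le_supNorm p hti) hnorm
    set z : ℤ := ∑ k ∈ Finset.range (n+1), p.coeff k * (i:ℤ)^k * ((n:ℤ)+1)^(n-k) with hzdef
    have hz : (z : ℝ) = ((n:ℝ)+1)^n * Polynomial.aeval t p := by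
      rw [Polynomial.aeval_eq_sum_range' (lt_of_le_of_lt hdeg (Nat.lt_succ_self n))]
      rw [hzdef, Finset.mul_sum]
      push_cast
      apply Finset.sum_congr rfl
      intro k hk
      have hkn : k ≤ n := Nat.lt_succ_iff.mp (Finset.mem_range.mp hk)
      have hpow : ((n:ℝ)+1)^(n-k) * ((n:ℝ)+1)^k = ((n:ℝ)+1)^n := by
        rw [← pow_add, Nat.sub_add_cancel hkn]
      have hNk : (((n:ℝ)+1)^k) ≠ 0 := by positivity
      rw [zsmul_eq_mul, ht, div_pow]
      rw [← hpow]
      field_simp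
    have hzb : |z| ≤ ((n:ℤ)+1)^n := by
      have h1 : |(z:ℝ)| ≤ ((n:ℝ)+1)^n := by
        rw [hz, abs_mul, abs_of_nonneg (by positivity : (0:ℝ) ≤ ((n:ℝ)+1)^n)]
        calc ((n:ℝ)+1)^n * |Polynomial.aeval t p| ≤ ((n:ℝ)+1)^n * 1 := by
              gcongr
          _ = ((n:ℝ)+1)^n := mul_one _
      exact_mod_cast h1
    refine ⟨z, Set.mem_Icc.mpr (abs_le.mp hzb), ?_⟩
    show (z:ℝ)/((n:ℝ)+1)^n = Φ p i
    simp only [hΦ]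
    rw [hz]
    exact mul_div_cancel_left₀ _ (by positivity)
  · intro p hp p' hp' h
    have hsub : (p - p').map (algebraMap ℤ ℝ) = 0 := by
      apply Polynomial.eq_zero_of_natDegree_lt_card_of_eval_eq_zero
        ((p - p').map (algebraMap ℤ ℝ))
        (f := fun i : Fin (n+1) => (i : ℝ)/((n:ℝ)+1))
      · intro a b hab
        rw [div_eq_div_iff hN.ne' hN.ne'] at hab
        exact Fin.ext (by exact_mod_cast mul_right_cancel₀ hN.ne' hab)
      · intro i
        have hi := congrFun h i
        simp only [hΦ] at hi
        rw [Polynomial.eval_map, ← Polynomial.aeval_def, map_sub, hi, sub_self]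
      · calc ((p - p').map (algebraMap ℤ ℝ)).natDegree ≤ (p - p').natDegree :=
              Polynomial.natDegree_map_le
          _ ≤ max p.natDegree p'.natDegree := Polynomial.natDegree_sub_le _ _
          _ < n + 1 := by
              have := hp.1; have := hp'.1
              omega
          _ = Fintype.card (Fin (n+1)) := (Fintype.card_fin _).symm
    have : p - p' = 0 := by
      have hinj : Function.Injective (algebraMap ℤ ℝ) := by
        rw [algebraMap_int_eq]
        exact fun a b hab => Int.cast_injective hab
      exact (Polynomial.map_eq_zero_iff hinj).mp hsub
    exact sub_eq_zero.mp this

end StmtAux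

theorem stmt_8 (n : ℕ) (hn : 0 < n) (heven : Even n) :
    ∃ p : Polynomial ℤ, p ≠ 0 ∧ p.natDegree ≤ n ∧
      (∀ x : ℝ, Polynomial.aeval x p = Polynomial.aeval (1 - x) p) ∧
      supNorm p 0 1 ^ ((1 : ℝ) / n) = tZ n 0 1 := by
  classical
  set F : Set (Polynomial ℤ) :=
    {p | p ≠ 0 ∧ p.natDegree ≤ n ∧ supNorm p 0 1 ≤ 1} with hF
  have hFfin : F.Finite :=
    (StmtAux.finite_small n).subset (fun p hp => ⟨hp.2.1, hp.2.2⟩)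
  have hXmem : (X : Polynomial ℤ) ∈ F := by
    refine ⟨X_ne_zero, by rw [natDegree_X]; exact hn, ?_⟩
    refine StmtAux.supNorm_le _ (fun x hx => ?_)
    simp only [aeval_X]
    rw [abs_of_nonneg hx.1]
    exact hx.2
  obtain ⟨Q, hQF, hQmin⟩ := Set.exists_min_image F (fun p => supNorm p 0 1) hFfin ⟨X, hXmem⟩
  obtain ⟨hQ0, hQdeg, hQle1⟩ := hQF
  have key : ∀ q : Polynomial ℤ, q ≠ 0 → q.natDegree ≤ n →
      (∀ x : ℝ, Polynomial.aeval x q = Polynomial.aeval (1 - x) q) →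
      supNorm q 0 1 ≤ supNorm Q 0 1 →
      ∃ p : Polynomial ℤ, p ≠ 0 ∧ p.natDegree ≤ n ∧
        (∀ x : ℝ, Polynomial.aeval x p = Polynomial.aeval (1 - x) p) ∧
        supNorm p 0 1 ^ ((1 : ℝ) / n) = tZ n 0 1 := by
    intro q hq0 hqdeg hqsym hqle
    have hq1 : supNorm q 0 1 ≤ 1 := le_trans hqle hQle1
    have hmin : ∀ p ∈ F, supNorm q 0 1 ≤ supNorm p 0 1 := fun p hp =>
      le_trans hqle (hQmin p hp)
    refine ⟨q, hq0, hqdeg, hqsym, ?_⟩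
    unfold tZ
    apply le_antisymm
    · refine le_csInf ⟨_, q, hq0, hqdeg, rfl⟩ ?_
      rintro r ⟨p, hp0, hpdeg, rfl⟩
      by_cases hsp : supNorm p 0 1 ≤ 1
      · exact Real.rpow_le_rpow (StmtAux.supNorm_nonneg q)
          (hmin p ⟨hp0, hpdeg, hsp⟩) (by positivity)
      · have h1p : (1:ℝ) ≤ supNorm p 0 1 := le_of_lt (lt_of_not_ge hsp)
        calc supNorm q 0 1 ^ ((1:ℝ)/n)
            ≤ 1 := Real.rpow_le_one (StmtAux.supNorm_nonneg q) hq1 (by positivity)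
          _ = 1 ^ ((1:ℝ)/n) := (Real.one_rpow _).symm
          _ ≤ supNorm p 0 1 ^ ((1:ℝ)/n) :=
              Real.rpow_le_rpow zero_le_one h1p (by positivity)
    · refine csInf_le ⟨0, ?_⟩ ⟨q, hq0, hqdeg, rfl⟩
      rintro r ⟨p, _, _, rfl⟩
      exact Real.rpow_nonneg (StmtAux.supNorm_nonneg p) _
  by_cases h1 : StmtAux.fsym Q = 0
  · have h2 : StmtAux.fsym (Q.comp (1 - X)) ≠ 0 := fun h => hQ0 (StmtAux.fsym_ne Q h1 h)
    have hcdeg : (Q.comp (1 - X)).natDegree ≤ n := by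
      refine le_trans natDegree_comp_le ?_
      rw [StmtAux.natDegree_one_sub_X, mul_one]
      exact hQdeg
    exact key _ h2 (StmtAux.fsym_natDegree heven hcdeg) (StmtAux.fsym_symm _)
      (le_trans (StmtAux.fsym_supNorm_le _) (StmtAux.supNorm_comp_le Q))
  · exact key _ h1 (StmtAux.fsym_natDegree heven hQdeg) (StmtAux.fsym_symm _)
      (StmtAux.fsym_supNorm_le Q)
end

section
/- Let G, F ∈ ℤ[x] with G of degree g, let c > 0, and suppose sup_{x∈[0,1/4]} |G(x)F(x)| ≤ c. Let a, b be integers with a ≥ 1, gcd(a,b) = 1 and b/a ∈ [0,1/4]. If c < |F(b/a)|/a^g, then the linear polynomial a·X − b divides G in ℤ[X]. -/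
open Polynomial Filter

theorem stmt_13 (G F : Polynomial ℤ) (g : ℕ) (hG : G.natDegree = g)
    (c : ℝ) (hc : 0 < c) (hsup : supNorm (G * F) 0 (1 / 4) ≤ c)
    (a b : ℤ) (ha : 1 ≤ a) (hcop : IsCoprime a b)
    (hmem : (b : ℝ) / a ∈ Set.Icc (0 : ℝ) (1 / 4))
    (hlt : c < |Polynomial.aeval ((b : ℝ) / a) F| / (a : ℝ) ^ g) :
    (Polynomial.C a * Polynomial.X - Polynomial.C b) ∣ G := by
  have ha0 : (a : ℝ) ≠ 0 := by positivity
  have hapow : (0 : ℝ) < (a : ℝ) ^ g := by positivity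
  set x : ℝ := (b : ℝ) / a with hx
  -- the value at x is bounded by the sup norm
  have hbdd : BddAbove ((fun x => |Polynomial.aeval x (G * F)|) '' Set.Icc (0:ℝ) (1/4)) :=
    (isCompact_Icc.image ((Polynomial.continuous_aeval (G * F)).abs)).bddAbove
  have hval : |Polynomial.aeval x (G * F)| ≤ c :=
    le_trans (le_csSup hbdd ⟨x, hmem, rfl⟩) hsup
  rw [map_mul, abs_mul] at hval
  have hF0 : 0 < |Polynomial.aeval x F| := by
    rcases (abs_nonneg (Polynomial.aeval x F)).lt_or_eq with h | h
    · exact h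
    · exfalso; rw [← h, zero_div] at hlt; linarith
  have hGlt : |Polynomial.aeval x G| < 1 / (a : ℝ) ^ g := by
    have h1 : |Polynomial.aeval x G| * |Polynomial.aeval x F| <
        (1 / (a : ℝ) ^ g) * |Polynomial.aeval x F| := by
      calc |Polynomial.aeval x G| * |Polynomial.aeval x F| ≤ c := hval
        _ < |Polynomial.aeval x F| / (a : ℝ) ^ g := hlt
        _ = (1 / (a : ℝ) ^ g) * |Polynomial.aeval x F| := by ring
    exact lt_of_mul_lt_mul_right h1 (le_of_lt hF0)
  -- the integer N = a^g * G(b/a)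
  set N : ℤ := (G.scaleRoots a).eval b with hN
  have hNval : (N : ℝ) = (a : ℝ) ^ g * Polynomial.aeval x G := by
    have := Polynomial.scaleRoots_eval₂_mul (p := G) (Int.castRingHom ℝ) x a
    rw [show ((Int.castRingHom ℝ) a * x) = ((Int.castRingHom ℝ) b) by
        simp [hx]; field_simp] at this
    rw [Polynomial.eval₂_at_apply] at this
    rw [Polynomial.aeval_def, algebraMap_int_eq]; simpa [hG] using this
  have hNabs : |(N : ℝ)| < 1 := by
    rw [hNval, abs_mul, abs_of_pos hapow]
    calc (a : ℝ) ^ g * |Polynomial.aeval x G| < (a : ℝ) ^ g * (1 / (a : ℝ) ^ g) :=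
          (mul_lt_mul_iff_right₀ hapow).2 hGlt
      _ = 1 := by field_simp
  have hN0 : N = 0 := by
    have h1 : |N| < 1 := by exact_mod_cast hNabs
    exact Int.abs_lt_one_iff.mp h1
  -- root over ℚ
  have hq0 : Polynomial.aeval ((b : ℚ) / a) G = 0 := by
    have haq : (a : ℚ) ≠ 0 := by positivity
    have := Polynomial.scaleRoots_eval₂_mul (p := G) (Int.castRingHom ℚ) ((b : ℚ) / a) a
    rw [show ((Int.castRingHom ℚ) a * ((b:ℚ)/a)) = ((Int.castRingHom ℚ) b) by
        simp; field_simp] at this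
    rw [Polynomial.eval₂_at_apply, ← hN, hN0] at this
    have h2 : ((a:ℚ)) ^ G.natDegree * Polynomial.aeval ((b : ℚ) / a) G = 0 := by
      rw [Polynomial.aeval_def]; simpa using this.symm
    have := mul_eq_zero.mp h2
    rcases this with h | h
    · exact absurd h (by positivity)
    · exact h
  -- Gauss' lemma argument
  set p : Polynomial ℤ := Polynomial.C a * Polynomial.X - Polynomial.C b with hp
  have hpprim : p.IsPrimitive := by
    intro r hr
    rw [Polynomial.C_dvd_iff_dvd_coeff] at hr
    have e1 : p.coeff 1 = a := by
      rw [hp, Polynomial.coeff_sub, Polynomial.coeff_C_mul, Polynomial.coeff_X_one,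
        Polynomial.coeff_C]
      simp
    have e0 : p.coeff 0 = -b := by
      rw [hp, Polynomial.coeff_sub, Polynomial.coeff_C_mul, Polynomial.coeff_X_zero,
        Polynomial.coeff_C]
      simp
    have h1 : r ∣ a := e1 ▸ hr 1
    have h0 : r ∣ b := dvd_neg.mp (e0 ▸ hr 0)
    obtain ⟨u, v, huv⟩ := hcop
    exact isUnit_of_dvd_one (by
      have : r ∣ u * a + v * b := dvd_add (Dvd.dvd.mul_left h1 u) (Dvd.dvd.mul_left h0 v)
      rwa [huv] at this)
  rcases eq_or_ne G 0 with hG0 | hG0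
  · simp [hG0]
  have hmapdvd : p.map (algebraMap ℤ ℚ) ∣ G.map (algebraMap ℤ ℚ) := by
    have hroot : Polynomial.IsRoot (G.map (algebraMap ℤ ℚ)) ((b : ℚ) / a) := by
      rwa [Polynomial.IsRoot, Polynomial.eval_map, ← Polynomial.aeval_def]
    have hdvd1 : (Polynomial.X - Polynomial.C ((b : ℚ) / a)) ∣ G.map (algebraMap ℤ ℚ) :=
      Polynomial.dvd_iff_isRoot.mpr hroot
    have haq : (a : ℚ) ≠ 0 := by positivity
    have hfac : p.map (algebraMap ℤ ℚ) =
        Polynomial.C ((a : ℚ)) * (Polynomial.X - Polynomial.C ((b : ℚ) / a)) := by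
      have hab : (a : ℚ) * ((b : ℚ) / a) = (b : ℚ) := by field_simp
      rw [hp]
      simp only [Polynomial.map_sub, Polynomial.map_mul, Polynomial.map_C, Polynomial.map_X,
        mul_sub, ← Polynomial.C_mul, eq_intCast]
      rw [hab]
      simp [Polynomial.C_eq_intCast, Polynomial.map_intCast]
    rw [hfac]
    exact (Polynomial.isUnit_C.mpr (isUnit_iff_ne_zero.mpr haq)).mul_left_dvd.mpr hdvd1
  -- pass to the primitive part
  have hcont0 : (G.content : ℚ) ≠ 0 := by
    have : G.content ≠ 0 := fun h => hG0 (Polynomial.content_eq_zero_iff.mp h)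
    exact_mod_cast this
  have hmapdvd' : p.map (algebraMap ℤ ℚ) ∣ G.primPart.map (algebraMap ℤ ℚ) := by
    have hGeq : G.map (algebraMap ℤ ℚ) =
        Polynomial.C ((G.content : ℚ)) * G.primPart.map (algebraMap ℤ ℚ) := by
      conv_lhs => rw [G.eq_C_content_mul_primPart]
      simp [Polynomial.map_mul]
    rw [hGeq] at hmapdvd
    exact ((Polynomial.isUnit_C.mpr (isUnit_iff_ne_zero.mpr hcont0)).dvd_mul_left).mp hmapdvd
  have hdvdprim : p ∣ G.primPart :=
    hpprim.dvd_of_fraction_map_dvd_fraction_map hmapdvd'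
  exact hdvdprim.trans G.primPart_dvd
end
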